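/- arXiv:2006.11800 — 6 statements merged into one kernel-verified Lean document; each statement's English description precedes it below -/
import Mathlib

section
/- If x is an irreducible point of a poset P (i.e., the set of elements strictly below x has a maximum, or the set of elements strictly above x has a minimum), then P has the fixed point property if and only if P \ {x} has the fixed point property. -/
variable {α : Type*}

def belowSet [PartialOrder α] (A : Set α) : Set α := {p | ∃ a ∈ A, p ≤ a}

def aboveSet [PartialOrder α] (A : Set α) : Set α := {p | ∃ a ∈ A, a ≤ p}

def connRel [PartialOrder α] (S : Set α) (x y : α) : Prop :=
  Relation.ReflTransGen (fun a b => a ∈ S ∧ b ∈ S ∧ (a ≤ b ∨ b ≤ a)) x y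

def connComp [PartialOrder α] (S : Set α) (x : α) : Set α := {y | connRel S x y}

def IsConnSub [PartialOrder α] (S : Set α) : Prop :=
  S.Nonempty ∧ ∀ x ∈ S, ∀ y ∈ S, connRel S x y

def IsConnCompOf [PartialOrder α] (S C : Set α) : Prop := ∃ x ∈ S, C = connComp S x

def crosscut [PartialOrder α] (X : Set α) : Set (Set α) :=
  {C | ∃ A : Set α, A ⊆ X ∧ A.Nonempty ∧ IsConnCompOf (belowSet A) C}

def crosscutU [PartialOrder α] (X : Set α) : Set (Set α) :=
  {C | ∃ A : Set α, A ⊆ X ∧ A.Nonempty ∧ IsConnCompOf (aboveSet A) C}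

def mxl (α : Type*) [PartialOrder α] : Set α := {a | IsMax a}
def mnl (α : Type*) [PartialOrder α] : Set α := {a | IsMin a}

def DSet (α : Type*) [PartialOrder α] : Set (Set α) := crosscut (mxl α)
def USet (α : Type*) [PartialOrder α] : Set (Set α) := crosscutU (mnl α)

def FPP (β : Type*) [Preorder β] : Prop := ∀ f : β → β, Monotone f → ∃ x, f x = x

-- auxiliary lemmas
section Max
variable [PartialOrder α] (x m : α)

lemma sub_of_fpp_max (hm : m < x) (hmax : ∀ y, y < x → y ≤ m) (hP : FPP α) :
    FPP {y : α // y ≠ x} := by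
  classical
  intro f hf
  let r : α → {y : α // y ≠ x} := fun y => if h : y = x then ⟨m, hm.ne⟩ else ⟨y, h⟩
  have hr : Monotone r := by
    intro a b hab
    simp only [r]
    by_cases ha : a = x
    · by_cases hb : b = x
      · rw [dif_pos ha, dif_pos hb]
      · rw [dif_pos ha, dif_neg hb]
        exact Subtype.mk_le_mk.2 (hm.le.trans (ha ▸ hab))
    · by_cases hb : b = x
      · rw [dif_neg ha, dif_pos hb]
        exact Subtype.mk_le_mk.2 (hmax a (lt_of_le_of_ne (hb ▸ hab) ha))
      · rw [dif_neg ha, dif_neg hb]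
        exact Subtype.mk_le_mk.2 hab
  have hF : Monotone (fun y => (f (r y)).val) := fun a b h => hf (hr h)
  obtain ⟨y, hy⟩ := hP _ hF
  have hy' : (f (r y)).val = y := hy
  have hyx : y ≠ x := hy' ▸ (f (r y)).2
  refine ⟨⟨y, hyx⟩, ?_⟩
  have hry : r y = ⟨y, hyx⟩ := dif_neg hyx
  rw [hry] at hy'
  exact Subtype.ext hy'

lemma fpp_of_sub_max (hm : m < x) (hmax : ∀ y, y < x → y ≤ m)
    (hQ : FPP {y : α // y ≠ x}) : FPP α := by
  classical
  intro f hf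
  let g : {y : α // y ≠ x} → {y : α // y ≠ x} :=
    fun p => if h : f p.1 = x then ⟨m, hm.ne⟩ else ⟨f p.1, h⟩
  have hg : Monotone g := by
    intro a b hab
    have hab' : a.1 ≤ b.1 := hab
    have hfab : f a.1 ≤ f b.1 := hf hab'
    simp only [g]
    by_cases h1 : f a.1 = x
    · by_cases h2 : f b.1 = x
      · rw [dif_pos h1, dif_pos h2]
      · rw [dif_pos h1, dif_neg h2]
        exact Subtype.mk_le_mk.2 (hm.le.trans (h1.symm.trans_le hfab))
    · by_cases h2 : f b.1 = x
      · rw [dif_neg h1, dif_pos h2]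
        exact Subtype.mk_le_mk.2 (hmax _ (lt_of_le_of_ne (hfab.trans h2.le) h1))
      · rw [dif_neg h1, dif_neg h2]
        exact Subtype.mk_le_mk.2 hfab
  obtain ⟨z, hz⟩ := hQ g hg
  have hz' : (g z).1 = z.1 := congrArg Subtype.val hz
  by_cases hfz : f z.1 = x
  · have hzm : z.1 = m := by
      simp only [g] at hz'; rw [dif_pos hfz] at hz'; exact hz'.symm
    have hfm : f m = x := hzm ▸ hfz
    have hxfx : x ≤ f x := by have h0 := hf hm.le; rw [hfm] at h0; exact h0
    rcases eq_or_lt_of_le hxfx with he | hlt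
    · exact ⟨x, he.symm⟩
    · have key : ∀ p : α, f x ≤ p → f p ≠ x :=
        fun p hp => (hlt.trans_le ((hf hxfx).trans (hf hp))).ne'
      let G : {y : α // y ≠ x} → {y : α // y ≠ x} :=
        fun p => if h : f x ≤ p.1 then ⟨f p.1, key p.1 h⟩ else ⟨f x, hlt.ne'⟩
      have hG : Monotone G := by
        intro a b hab
        have hab' : a.1 ≤ b.1 := hab
        simp only [G]
        by_cases h1 : f x ≤ a.1
        · have h2 : f x ≤ b.1 := h1.trans hab'
          rw [dif_pos h1, dif_pos h2]
          exact Subtype.mk_le_mk.2 (hf hab')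
        · by_cases h2 : f x ≤ b.1
          · rw [dif_neg h1, dif_pos h2]
            exact Subtype.mk_le_mk.2 ((hf hxfx).trans (hf h2))
          · rw [dif_neg h1, dif_neg h2]
      obtain ⟨w, hw⟩ := hQ G hG
      have hw' : (G w).1 = w.1 := congrArg Subtype.val hw
      simp only [G] at hw'
      by_cases hwx : f x ≤ w.1
      · rw [dif_pos hwx] at hw'
        exact ⟨w.1, hw'⟩
      · rw [dif_neg hwx] at hw'
        exact absurd (le_of_eq hw') hwx
  · refine ⟨z.1, ?_⟩
    simp only [g] at hz'; rw [dif_neg hfz] at hz'; exact hz'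
end Max

section Min
variable [PartialOrder α] (x u : α)

lemma sub_of_fpp_min (hu : x < u) (humin : ∀ y, x < y → u ≤ y) (hP : FPP α) :
    FPP {y : α // y ≠ x} := by
  classical
  intro f hf
  let r : α → {y : α // y ≠ x} := fun y => if h : y = x then ⟨u, hu.ne'⟩ else ⟨y, h⟩
  have hr : Monotone r := by
    intro a b hab
    simp only [r]
    by_cases ha : a = x
    · by_cases hb : b = x
      · rw [dif_pos ha, dif_pos hb]
      · rw [dif_pos ha, dif_neg hb]
        exact Subtype.mk_le_mk.2 (humin b (lt_of_le_of_ne (ha ▸ hab) (Ne.symm hb)))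
    · by_cases hb : b = x
      · rw [dif_neg ha, dif_pos hb]
        exact Subtype.mk_le_mk.2 ((hb ▸ hab).trans hu.le)
      · rw [dif_neg ha, dif_neg hb]
        exact Subtype.mk_le_mk.2 hab
  have hF : Monotone (fun y => (f (r y)).val) := fun a b h => hf (hr h)
  obtain ⟨y, hy⟩ := hP _ hF
  have hy' : (f (r y)).val = y := hy
  have hyx : y ≠ x := hy' ▸ (f (r y)).2
  refine ⟨⟨y, hyx⟩, ?_⟩
  have hry : r y = ⟨y, hyx⟩ := dif_neg hyx
  rw [hry] at hy'
  exact Subtype.ext hy'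

lemma fpp_of_sub_min (hu : x < u) (humin : ∀ y, x < y → u ≤ y)
    (hQ : FPP {y : α // y ≠ x}) : FPP α := by
  classical
  intro f hf
  let g : {y : α // y ≠ x} → {y : α // y ≠ x} :=
    fun p => if h : f p.1 = x then ⟨u, hu.ne'⟩ else ⟨f p.1, h⟩
  have hg : Monotone g := by
    intro a b hab
    have hab' : a.1 ≤ b.1 := hab
    have hfab : f a.1 ≤ f b.1 := hf hab'
    simp only [g]
    by_cases h1 : f a.1 = x
    · by_cases h2 : f b.1 = x
      · rw [dif_pos h1, dif_pos h2]
      · rw [dif_pos h1, dif_neg h2]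
        exact Subtype.mk_le_mk.2 (humin _ (lt_of_le_of_ne (h1.symm.trans_le hfab) (Ne.symm h2)))
    · by_cases h2 : f b.1 = x
      · rw [dif_neg h1, dif_pos h2]
        exact Subtype.mk_le_mk.2 ((hfab.trans h2.le).trans hu.le)
      · rw [dif_neg h1, dif_neg h2]
        exact Subtype.mk_le_mk.2 hfab
  obtain ⟨z, hz⟩ := hQ g hg
  have hz' : (g z).1 = z.1 := congrArg Subtype.val hz
  by_cases hfz : f z.1 = x
  · have hzu : z.1 = u := by
      simp only [g] at hz'; rw [dif_pos hfz] at hz'; exact hz'.symm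
    have hfu : f u = x := hzu ▸ hfz
    have hfxx : f x ≤ x := by have h0 := hf hu.le; rw [hfu] at h0; exact h0
    rcases eq_or_lt_of_le hfxx with he | hlt
    · exact ⟨x, he⟩
    · have key : ∀ p : α, p ≤ f x → f p ≠ x :=
        fun p hp => (lt_of_le_of_lt ((hf hp).trans (hf hfxx)) hlt).ne
      let G : {y : α // y ≠ x} → {y : α // y ≠ x} :=
        fun p => if h : p.1 ≤ f x then ⟨f p.1, key p.1 h⟩ else ⟨f x, hlt.ne⟩
      have hG : Monotone G := by
        intro a b hab
        have hab' : a.1 ≤ b.1 := hab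
        simp only [G]
        by_cases h2 : b.1 ≤ f x
        · have h1 : a.1 ≤ f x := hab'.trans h2
          rw [dif_pos h1, dif_pos h2]
          exact Subtype.mk_le_mk.2 (hf hab')
        · by_cases h1 : a.1 ≤ f x
          · rw [dif_pos h1, dif_neg h2]
            exact Subtype.mk_le_mk.2 ((hf h1).trans (hf hfxx))
          · rw [dif_neg h1, dif_neg h2]
      obtain ⟨w, hw⟩ := hQ G hG
      have hw' : (G w).1 = w.1 := congrArg Subtype.val hw
      simp only [G] at hw'
      by_cases hwx : w.1 ≤ f x
      · rw [dif_pos hwx] at hw'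
        exact ⟨w.1, hw'⟩
      · rw [dif_neg hwx] at hw'
        exact absurd (le_of_eq hw'.symm) hwx
  · refine ⟨z.1, ?_⟩
    simp only [g] at hz'; rw [dif_neg hfz] at hz'; exact hz'
end Min


theorem stmt0 [PartialOrder α] (x : α)
    (hirr : (∃ m, m < x ∧ ∀ y, y < x → y ≤ m) ∨ (∃ m, x < m ∧ ∀ y, x < y → m ≤ y)) :
    FPP α ↔ FPP {y : α // y ≠ x} := by
  rcases hirr with ⟨m, hm, hmax⟩ | ⟨u, hu, humin⟩
  · exact ⟨sub_of_fpp_max x m hm hmax, fpp_of_sub_max x m hm hmax⟩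
  · exact ⟨sub_of_fpp_min x u hu humin, fpp_of_sub_min x u hu humin⟩
end

section
/- Every finite poset that is dismantlable by irreducibles has the fixed point property. -/
variable {α : Type*}

def IrredIn [PartialOrder α] (S : Set α) (x : α) : Prop :=
  x ∈ S ∧ ((∃ m ∈ S, m < x ∧ ∀ y ∈ S, y < x → y ≤ m) ∨
           (∃ m ∈ S, x < m ∧ ∀ y ∈ S, x < y → m ≤ y))

def DismantlableByIrreducibles [PartialOrder α] (S : Set α) : Prop :=
  ∃ (n : ℕ) (Ps : ℕ → Set α), Ps 0 = S ∧ (∃ z, Ps n = {z}) ∧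
    ∀ j < n, ∃ x, IrredIn (Ps j) x ∧ Ps (j + 1) = Ps j \ {x}

lemma fpp_of_le_apply {β : Type*} [PartialOrder β] [Finite β]
    (f : β → β) (hf : Monotone f) (x : β) (hx : x ≤ f x) : ∃ p, f p = p := by
  have hchain : ∀ k, f^[k] x ≤ f^[k+1] x := by
    intro k
    induction k with
    | zero => simpa using hx
    | succ k ih =>
      rw [Function.iterate_succ_apply', Function.iterate_succ_apply']
      exact hf ih
  have hmono : Monotone (fun k => f^[k] x) := monotone_nat_of_le_succ hchain
  obtain ⟨m, n, hne, heq⟩ := Finite.exists_ne_map_eq_of_infinite (fun k => f^[k] x)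
  wlog hlt : m < n generalizing m n
  · exact this n m hne.symm heq.symm (by omega)
  refine ⟨f^[m] x, ?_⟩
  have h1 : f^[m+1] x ≤ f^[n] x := hmono (by omega)
  have h2 : f^[m+1] x = f^[m] x := le_antisymm (heq ▸ h1) (hchain m)
  rw [← Function.iterate_succ_apply' f m x]
  exact h2

lemma fpp_of_apply_le {β : Type*} [PartialOrder β] [Finite β]
    (f : β → β) (hf : Monotone f) (x : β) (hx : f x ≤ x) : ∃ p, f p = p :=
  fpp_of_le_apply (β := βᵒᵈ) f hf.dual x hx

lemma step_lemma {α : Type*} [PartialOrder α] [Finite α] (S : Set α) (x : α)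
    (hx : IrredIn S x) (hT : FPP ↥(S \ {x})) : FPP ↥S := by
  classical
  intro f hf
  obtain ⟨hxS, hcase⟩ := hx
  let ι : ↥(S \ {x}) → ↥S := fun a => ⟨a, a.2.1⟩
  have hι : Monotone ι := fun a b h => h
  rcases hcase with ⟨m, hmS, hmx, hmax⟩ | ⟨m, hmS, hxm, hmin⟩
  · have hmT : m ∈ S \ {x} := ⟨hmS, by simp [ne_of_lt hmx]⟩
    let r : ↥S → ↥(S \ {x}) := fun a =>
      if h : (a : α) = x then ⟨m, hmT⟩ else ⟨a, ⟨a.2, h⟩⟩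
    have hr : Monotone r := by
      intro a b hab
      have hab' : (a : α) ≤ (b : α) := hab
      by_cases ha : (a : α) = x <;> by_cases hb : (b : α) = x <;>
        simp only [r, ha, hb, dif_pos, dif_neg, not_false_iff] <;>
        show _ ≤ (_ : α)
      · exact le_refl m
      · exact le_trans hmx.le (ha ▸ hab')
      · have : (a : α) < x := lt_of_le_of_ne (hb ▸ hab') ha
        exact hmax a a.2 this
      · exact hab' 
    obtain ⟨p, hp⟩ := hT (r ∘ f ∘ ι) (hr.comp (hf.comp hι))
    by_cases hpx : (f (ι p) : α) = x
    · have hpm : (p : α) = m := by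
        have : r (f (ι p)) = p := hp
        simp only [r, dif_pos hpx] at this
        exact (congrArg Subtype.val this).symm
      have h1 : f (ι p) ≤ f ⟨x, hxS⟩ := hf (by
        show (ι p : α) ≤ x
        rw [show (ι p : α) = (p : α) from rfl, hpm]
        exact hmx.le)
      have h2 : (⟨x, hxS⟩ : ↥S) ≤ f ⟨x, hxS⟩ := by
        calc (⟨x, hxS⟩ : ↥S) = f (ι p) := Subtype.ext hpx.symm
        _ ≤ f ⟨x, hxS⟩ := h1
      exact fpp_of_le_apply f hf _ h2
    · refine ⟨ι p, ?_⟩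
      have : r (f (ι p)) = p := hp
      simp only [r, dif_neg hpx] at this
      have hv : ((f (ι p) : α)) = (p : α) := congrArg Subtype.val this
      exact Subtype.ext hv
  · have hmT : m ∈ S \ {x} := ⟨hmS, by simp [(ne_of_lt hxm).symm]⟩
    let r : ↥S → ↥(S \ {x}) := fun a =>
      if h : (a : α) = x then ⟨m, hmT⟩ else ⟨a, ⟨a.2, h⟩⟩
    have hr : Monotone r := by
      intro a b hab
      have hab' : (a : α) ≤ (b : α) := hab
      by_cases ha : (a : α) = x <;> by_cases hb : (b : α) = x <;>
        simp only [r, ha, hb, dif_pos, dif_neg, not_false_iff] <;>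
        show _ ≤ (_ : α)
      · exact le_refl m
      · have : x < (b : α) := lt_of_le_of_ne (ha ▸ hab') (fun e => hb e.symm)
        exact hmin b b.2 this
      · exact le_trans (hb ▸ hab') hxm.le
      · exact hab' 
    obtain ⟨p, hp⟩ := hT (r ∘ f ∘ ι) (hr.comp (hf.comp hι))
    by_cases hpx : (f (ι p) : α) = x
    · have hpm : (p : α) = m := by
        have : r (f (ι p)) = p := hp
        simp only [r, dif_pos hpx] at this
        exact (congrArg Subtype.val this).symm
      have h1 : f ⟨x, hxS⟩ ≤ f (ι p) := hf (by
        show x ≤ (ι p : α)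
        rw [show (ι p : α) = (p : α) from rfl, hpm]
        exact hxm.le)
      have h2 : f ⟨x, hxS⟩ ≤ (⟨x, hxS⟩ : ↥S) := by
        calc f ⟨x, hxS⟩ ≤ f (ι p) := h1
        _ = (⟨x, hxS⟩ : ↥S) := Subtype.ext hpx
      exact fpp_of_apply_le f hf _ h2
    · refine ⟨ι p, ?_⟩
      have : r (f (ι p)) = p := hp
      simp only [r, dif_neg hpx] at this
      have hv : ((f (ι p) : α)) = (p : α) := congrArg Subtype.val this
      exact Subtype.ext hv

lemma main_lemma {α : Type*} [PartialOrder α] [Finite α] :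
    ∀ n (S : Set α) (Ps : ℕ → Set α), Ps 0 = S → (∃ z, Ps n = {z}) →
    (∀ j < n, ∃ x, IrredIn (Ps j) x ∧ Ps (j + 1) = Ps j \ {x}) → FPP ↥S := by
  intro n
  induction n with
  | zero =>
    rintro S Ps h0 ⟨z, hz⟩ _
    subst h0
    rw [hz]
    intro f _
    refine ⟨⟨z, rfl⟩, ?_⟩
    have : ∀ a : ↥({z} : Set α), a = ⟨z, rfl⟩ := fun a => Subtype.ext a.2
    rw [this (f _)]
  | succ n ih =>
    intro S Ps h0 hz hstep
    obtain ⟨x, hx, h1⟩ := hstep 0 (Nat.succ_pos n)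
    have hT := ih (Ps 1) (fun j => Ps (j + 1)) rfl hz
      (fun j hj => hstep (j + 1) (by omega))
    rw [h0] at hx h1
    rw [h1] at hT
    exact step_lemma S x hx hT

theorem stmt1 [PartialOrder α] [Finite α]
    (h : DismantlableByIrreducibles (Set.univ : Set α)) : FPP α := by
  obtain ⟨n, Ps, h0, hz, hstep⟩ := h
  have huniv := main_lemma n Set.univ Ps h0 hz hstep
  intro f hf
  obtain ⟨p, hp⟩ := huniv (fun a => ⟨f a, trivial⟩)
    (fun a b hab => hf hab)
  exact ⟨p, congrArg Subtype.val hp⟩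
end

section
/- Let n ≥ 2 and let P be the 2n-crown: the poset on elements {1,…,n} ∪ {n+1,…,2n} where the only strict relations are i < n+i for 1 ≤ i ≤ n, i < n+i+1 for 1 ≤ i ≤ n−1, and n < n+1. Then every order-preserving map f : P → P that is not bijective has a fixed point. -/
/-- The `2n`-crown: `.inl i` are the minimal elements (corresponding to `1,…,n`)
and `.inr j` the maximal elements (corresponding to `n+1,…,2n`), with
`.inl i` below exactly `.inr i` and `.inr (i+1 mod n)` (cyclically): this encodes
the relations `i < n+i`, `i < n+i+1` and `n < n+1`. -/
def Crown (n : ℕ) : Type := Fin n ⊕ Fin n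

def crownLE {n : ℕ} : Fin n ⊕ Fin n → Fin n ⊕ Fin n → Prop
  | .inl i, .inl j => i = j
  | .inl i, .inr j => j = i ∨ (j : ℕ) = ((i : ℕ) + 1) % n
  | .inr i, .inr j => i = j
  | .inr _, .inl _ => False

instance (n : ℕ) : PartialOrder (Crown n) where
  le := crownLE
  le_refl x := by cases x <;> simp [crownLE]
  le_trans a b c hab hbc := by
    cases a <;> cases b <;> cases c <;> simp_all [crownLE]
  le_antisymm a b hab hba := by
    cases a <;> cases b <;> simp_all [crownLE] <;> rfl

namespace CrownAux

variable {n : ℕ}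

def P2 : Crown n → ZMod (2 * n)
  | .inl i => ((2 * (i : ℕ) + 1 : ℕ) : ZMod (2 * n))
  | .inr j => ((2 * (j : ℕ) : ℕ) : ZMod (2 * n))

def V2 (hn : 0 < n) (x : ZMod (2 * n)) : Crown n :=
  if x.val % 2 = 0 then
    Sum.inr ⟨x.val / 2, by
      have : NeZero (2 * n) := ⟨by omega⟩
      have := x.val_lt
      omega⟩
  else
    Sum.inl ⟨x.val / 2, by
      have : NeZero (2 * n) := ⟨by omega⟩
      have := x.val_lt
      omega⟩

lemma PV (hn : 0 < n) (x : ZMod (2 * n)) : P2 (V2 hn x) = x := by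
  have hne : NeZero (2 * n) := ⟨by omega⟩
  have hx : x.val < 2 * n := x.val_lt
  have hself : ((x.val : ℕ) : ZMod (2 * n)) = x := ZMod.natCast_rightInverse x
  unfold V2
  by_cases hc : x.val % 2 = 0 <;> simp only [hc, ↓reduceIte]
  · show ((2 * (x.val / 2) : ℕ) : ZMod (2 * n)) = x
    rw [show 2 * (x.val / 2) = x.val by omega, hself]
  · show ((2 * (x.val / 2) + 1 : ℕ) : ZMod (2 * n)) = x
    rw [show 2 * (x.val / 2) + 1 = x.val by omega, hself]

lemma VP (hn : 0 < n) (y : Crown n) : V2 hn (P2 y) = y := by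
  have hne : NeZero (2 * n) := ⟨by omega⟩
  cases y with
  | inl i =>
    have hv : ((2 * (i : ℕ) + 1 : ℕ) : ZMod (2 * n)).val = 2 * (i : ℕ) + 1 :=
      ZMod.val_cast_of_lt (by omega)
    show V2 hn ((2 * (i : ℕ) + 1 : ℕ) : ZMod (2 * n)) = Sum.inl i
    unfold V2
    simp only [hv]
    simp only [show ¬ ((2 * (i : ℕ) + 1) % 2 = 0) by omega, ↓reduceIte]
    congr 1
    exact Fin.ext (by simp; omega)
  | inr j =>
    have hv : ((2 * (j : ℕ) : ℕ) : ZMod (2 * n)).val = 2 * (j : ℕ) :=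
      ZMod.val_cast_of_lt (by omega)
    show V2 hn ((2 * (j : ℕ) : ℕ) : ZMod (2 * n)) = Sum.inr j
    unfold V2
    simp only [hv]
    simp only [show 2 * (j : ℕ) % 2 = 0 by omega, ↓reduceIte]
    congr 1
    exact Fin.ext (by simp)

lemma le_P (hn : 0 < n) {u w : Crown n} (h : u ≤ w) :
    P2 w = P2 u ∨ P2 w = P2 u + 1 ∨ P2 w + 1 = P2 u := by
  have h' : crownLE u w := h
  cases u with
  | inl i =>
    cases w with
    | inl j =>
      have : i = j := h'
      subst this; left; rfl
    | inr j =>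
      rcases h' with h' | h'
      · subst h'
        right; right
        show ((2 * (j : ℕ) : ℕ) : ZMod (2 * n)) + 1 = ((2 * (j : ℕ) + 1 : ℕ) : ZMod (2 * n))
        push_cast; ring
      · right; left
        show ((2 * (j : ℕ) : ℕ) : ZMod (2 * n)) = ((2 * (i : ℕ) + 1 : ℕ) : ZMod (2 * n)) + 1
        rw [h']
        have key : 2 * (((i : ℕ) + 1) % n) + (2 * n) * (((i : ℕ) + 1) / n) = 2 * ((i : ℕ) + 1) := by
          calc 2 * (((i : ℕ) + 1) % n) + (2 * n) * (((i : ℕ) + 1) / n)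
              = 2 * ((((i : ℕ) + 1) % n) + n * (((i : ℕ) + 1) / n)) := by ring
            _ = 2 * ((i : ℕ) + 1) := by rw [Nat.mod_add_div]
        calc ((2 * (((i : ℕ) + 1) % n) : ℕ) : ZMod (2 * n))
            = ((2 * (((i : ℕ) + 1) % n) + (2 * n) * (((i : ℕ) + 1) / n) : ℕ) : ZMod (2 * n))
              - ((2 * n : ℕ) : ZMod (2 * n)) * ((((i : ℕ) + 1) / n : ℕ) : ZMod (2 * n)) := by
                push_cast; ring
          _ = ((2 * ((i : ℕ) + 1) : ℕ) : ZMod (2 * n)) := by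
                rw [key, ZMod.natCast_self]; ring
          _ = ((2 * (i : ℕ) + 1 : ℕ) : ZMod (2 * n)) + 1 := by push_cast; ring
  | inr i =>
    cases w with
    | inl j => exact absurd h' (by simp [crownLE])
    | inr j =>
      have : i = j := h'
      subst this; left; rfl

lemma val_add_one (hn : 0 < n) (A : ZMod (2 * n)) :
    (A + 1).val = (A.val + 1) % (2 * n) := by
  have hne : NeZero (2 * n) := ⟨by omega⟩
  have h1 : Fact (1 < 2 * n) := ⟨by omega⟩
  rw [ZMod.val_add, ZMod.val_one]

lemma comp (hn : 0 < n) (x : ZMod (2 * n)) :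
    V2 hn x ≤ V2 hn (x + 1) ∨ V2 hn (x + 1) ≤ V2 hn x := by
  have hne : NeZero (2 * n) := ⟨by omega⟩
  have hx : x.val < 2 * n := x.val_lt
  have hv1 : (x + 1).val = (x.val + 1) % (2 * n) := val_add_one hn x
  unfold V2
  rcases Nat.even_or_odd x.val with he | ho
  · -- x.val even, so x.val + 1 < 2*n and odd
    have h1 : x.val % 2 = 0 := Nat.even_iff.mp he
    have h2 : (x + 1).val = x.val + 1 := by rw [hv1, Nat.mod_eq_of_lt (by omega)]
    right
    simp only [h1, show ¬ ((x + 1).val % 2 = 0) by omega, ↓reduceIte]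
    show crownLE (Sum.inl ⟨(x+1).val / 2, _⟩) (Sum.inr ⟨x.val / 2, _⟩)
    exact Or.inl (Fin.ext (show x.val / 2 = (x+1).val / 2 by omega))
  · have h1 : x.val % 2 ≠ 0 := by have := Nat.odd_iff.mp ho; omega
    left
    simp only [h1, ↓reduceIte]
    by_cases hc : x.val + 1 < 2 * n
    · have h2 : (x + 1).val = x.val + 1 := by rw [hv1, Nat.mod_eq_of_lt (by omega)]
      simp only [show (x + 1).val % 2 = 0 by omega, ↓reduceIte]
      show crownLE (Sum.inl ⟨x.val / 2, _⟩) (Sum.inr ⟨(x+1).val / 2, _⟩)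
      refine Or.inr ?_
      show (x+1).val / 2 = (x.val / 2 + 1) % n
      rw [Nat.mod_eq_of_lt (by omega)]
      omega
    · have h2 : (x + 1).val = 0 := by rw [hv1, show x.val + 1 = 2 * n by omega, Nat.mod_self]
      simp only [show (x + 1).val % 2 = 0 by omega, ↓reduceIte]
      show crownLE (Sum.inl ⟨x.val / 2, _⟩) (Sum.inr ⟨(x+1).val / 2, _⟩)
      refine Or.inr ?_
      show (x+1).val / 2 = (x.val / 2 + 1) % n
      have hv : x.val / 2 + 1 = n := by omega
      rw [h2, hv, Nat.mod_self]

end CrownAux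

theorem stmt2 (n : ℕ) (hn : 2 ≤ n) (f : Crown n → Crown n) (hf : Monotone f)
    (hbij : ¬ Function.Bijective f) : ∃ x, f x = x := by
  by_contra hfix
  push_neg at hfix
  have hn0 : 0 < n := by omega
  haveI hne : NeZero (2 * n) := ⟨by omega⟩
  haveI hf1 : Fact (1 < 2 * n) := ⟨by omega⟩
  set V : ZMod (2 * n) → Crown n := CrownAux.V2 hn0 with hV
  set P : Crown n → ZMod (2 * n) := CrownAux.P2 with hP
  have PV : ∀ x, P (V x) = x := CrownAux.PV hn0
  have VP : ∀ y, V (P y) = y := CrownAux.VP hn0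
  set p : ZMod (2 * n) → ZMod (2 * n) := fun x => P (f (V x)) with hp
  have fV : ∀ x, f (V x) = V (p x) := fun x => (VP (f (V x))).symm
  have step : ∀ x, p (x + 1) = p x ∨ p (x + 1) = p x + 1 ∨ p (x + 1) + 1 = p x := by
    intro x
    rcases CrownAux.comp hn0 x with h | h
    · exact CrownAux.le_P hn0 (hf h)
    · rcases CrownAux.le_P hn0 (hf h) with h' | h' | h'
      · exact Or.inl h'.symm
      · exact Or.inr (Or.inr h'.symm)
      · exact Or.inr (Or.inl h'.symm)
  have Vne : ∀ x : ZMod (2 * n), V x ≠ V (x + 1) := by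
    intro x hcontra
    have h0 := congrArg P hcontra
    rw [PV, PV] at h0
    simp at h0
  have noswap : ∀ x : ZMod (2 * n), p x = x + 1 → p (x + 1) = x → False := by
    intro x h1 h2
    have hf1 : f (V x) = V (x + 1) := by rw [fV x, h1]
    have hf2 : f (V (x + 1)) = V x := by rw [fV (x + 1), h2]
    rcases CrownAux.comp hn0 x with h | h
    · have h' := hf h
      rw [hf1, hf2] at h'
      exact Vne x (le_antisymm h h')
    · have h' := hf h
      rw [hf1, hf2] at h'
      exact Vne x (le_antisymm h' h)
  set g : ℕ → ℕ := fun k => (((k : ℕ) : ZMod (2 * n)) - p ((k : ℕ) : ZMod (2 * n))).val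
    with hg
  have gne : ∀ k : ℕ, g k ≠ 0 := by
    intro k h0
    have hz : ((k : ℕ) : ZMod (2 * n)) - p ((k : ℕ) : ZMod (2 * n)) = 0 :=
      (ZMod.val_eq_zero _).mp h0
    have hpk : p ((k : ℕ) : ZMod (2 * n)) = ((k : ℕ) : ZMod (2 * n)) :=
      (sub_eq_zero.mp hz).symm
    exact hfix (V ((k : ℕ) : ZMod (2 * n))) (by rw [fV, hpk])
  have gmono : ∀ k : ℕ, g k ≤ g (k + 1) := by
    intro k
    set x : ZMod (2 * n) := ((k : ℕ) : ZMod (2 * n)) with hx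
    have hcast : (((k + 1 : ℕ)) : ZMod (2 * n)) = x + 1 := by push_cast; ring
    have hA : g k = (x - p x).val := rfl
    have hB : g (k + 1) = ((x + 1) - p (x + 1)).val := by
      simp only [hg, hcast]
    have hltA : (x - p x).val < 2 * n := ZMod.val_lt _
    rcases step x with h | h | h
    · -- B = A + 1
      have hBA : (x + 1) - p (x + 1) = (x - p x) + 1 := by rw [h]; ring
      have hval := CrownAux.val_add_one hn0 (x - p x)
      rw [hBA, hval] at hB
      by_cases hc : (x - p x).val + 1 < 2 * n
      · rw [Nat.mod_eq_of_lt hc] at hB; omega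
      · exfalso
        apply gne (k + 1)
        rw [hB, show (x - p x).val + 1 = 2 * n by omega, Nat.mod_self]
    · -- B = A
      have hBA : (x + 1) - p (x + 1) = x - p x := by rw [h]; ring
      rw [hBA] at hB; omega
    · -- B = A + 2
      have hBA : (x + 1) - p (x + 1) = ((x - p x) + 1) + 1 := by rw [← h]; ring
      have hval1 := CrownAux.val_add_one hn0 (x - p x)
      have hval2 := CrownAux.val_add_one hn0 ((x - p x) + 1)
      rw [hBA, hval2, hval1] at hB
      by_cases hc : (x - p x).val + 1 < 2 * n
      · rw [Nat.mod_eq_of_lt hc] at hB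
        by_cases hc2 : (x - p x).val + 2 < 2 * n
        · rw [Nat.mod_eq_of_lt (by omega)] at hB; omega
        · exfalso
          apply gne (k + 1)
          rw [hB, show (x - p x).val + 1 + 1 = 2 * n by omega, Nat.mod_self]
      · -- A.val = 2n - 1 : swap situation
        exfalso
        have hA1 : (x - p x) + 1 = 0 := by
          apply (ZMod.val_eq_zero _).mp
          rw [hval1, show (x - p x).val + 1 = 2 * n by omega, Nat.mod_self]
        have hswap1 : p x = x + 1 := by linear_combination -hA1
        have hswap2 : p (x + 1) = x := by linear_combination h - hA1
        exact noswap x hswap1 hswap2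
  have gmonotone : Monotone g := monotone_nat_of_le_succ gmono
  have gper : g (2 * n) = g 0 := by
    have hc : (((2 * n : ℕ)) : ZMod (2 * n)) = ((0 : ℕ) : ZMod (2 * n)) := by
      simp [ZMod.natCast_self]
    simp only [hg, hc]
  have gconst : ∀ k, k ≤ 2 * n → g k = g 0 := fun k hk =>
    le_antisymm (gper ▸ gmonotone hk) (gmonotone (Nat.zero_le k))
  set C : ZMod (2 * n) := ((0 : ℕ) : ZMod (2 * n)) - p ((0 : ℕ) : ZMod (2 * n)) with hC
  have hCx : ∀ x : ZMod (2 * n), x - p x = C := by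
    intro x
    have h1 : g x.val = g 0 := gconst _ (le_of_lt (ZMod.val_lt x))
    have h2 : ((x.val : ℕ) : ZMod (2 * n)) = x := ZMod.natCast_rightInverse x
    have h3 : (x - p x).val = C.val := by
      simp only [hg, h2] at h1
      exact h1
    have h4 := congrArg (fun m : ℕ => ((m : ℕ) : ZMod (2 * n))) h3
    simpa [ZMod.natCast_rightInverse (x - p x), ZMod.natCast_rightInverse C] using h4
  have hpx : ∀ x, p x = x - C := by
    intro x
    have := hCx x
    linear_combination -this
  have hfy : ∀ y, f y = V (P y - C) := by
    intro y
    conv_lhs => rw [← VP y]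
    rw [fV (P y), hpx (P y)]
  apply hbij
  rw [Function.bijective_iff_has_inverse]
  refine ⟨fun y => V (P y + C), ?_, ?_⟩
  · intro y
    show V (P (f y) + C) = y
    rw [hfy y, PV, sub_add_cancel, VP]
  · intro y
    show f (V (P y + C)) = y
    rw [hfy (V (P y + C)), PV, add_sub_cancel_right, VP]
end

section
/- Let P be a poset with mxl(P) a cutset. If the poset 𝒟(P) (ordered by inclusion) has the fixed point property, and every element C ∈ 𝒟(P), viewed as a subposet of P, has the fixed point property, then P has the fixed point property. -/
variable {α : Type*}

section AuxLemmas
variable [PartialOrder α]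

lemma connRel_symm {S : Set α} : Symmetric (connRel S) :=
  fun x y h => @Std.Symm.symm _ _ (@Relation.ReflTransGen.stdSymm _
    (fun a b => a ∈ S ∧ b ∈ S ∧ (a ≤ b ∨ b ≤ a)) ⟨fun _ _ h => ⟨h.2.1, h.1, h.2.2.symm⟩⟩) x y h

lemma connRel_mono {S T : Set α} (hST : S ⊆ T) {x y : α} (h : connRel S x y) :
    connRel T x y :=
  Relation.ReflTransGen.mono (fun _ _ h => ⟨hST h.1, hST h.2.1, h.2.2⟩) _ _ h

lemma connRel_mem {S : Set α} {x y : α} (h : connRel S x y) (hx : x ∈ S) : y ∈ S := by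
  induction h with
  | refl => exact hx
  | tail _ h ih => exact h.2.1

lemma connRel_connComp {S : Set α} {x y : α} (h : connRel S x y) :
    connRel (connComp S x) x y := by
  induction h with
  | refl => exact Relation.ReflTransGen.refl
  | tail hb step ih => exact ih.tail ⟨hb, hb.tail step, step.2.2⟩

lemma isConnSub_connComp {S : Set α} {x : α} : IsConnSub (connComp S x) := by
  refine ⟨⟨x, Relation.ReflTransGen.refl⟩, fun a ha b hb => ?_⟩
  exact (connRel_symm (connRel_connComp ha)).trans (connRel_connComp hb)

lemma isConnSub_image {S : Set α} (hS : IsConnSub S) {f : α → α} (hf : Monotone f) :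
    IsConnSub (f '' S) := by
  refine ⟨hS.1.image f, ?_⟩
  rintro _ ⟨a, ha, rfl⟩ _ ⟨b, hb, rfl⟩
  exact Relation.ReflTransGen.lift f
    (fun u v h => ⟨⟨u, h.1, rfl⟩, ⟨v, h.2.1, rfl⟩,
      h.2.2.imp (fun h => hf h) (fun h => hf h)⟩) _ _ (hS.2 a ha b hb)

lemma isConnSub_of_memD {D : Set α} (hD : D ∈ DSet α) : IsConnSub D := by
  obtain ⟨A, _, _, x, _, rfl⟩ := hD
  exact isConnSub_connComp

/-- The set of maximal elements above some element of `S`. -/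
def maxAbove (S : Set α) : Set α := {m | IsMax m ∧ ∃ s ∈ S, s ≤ m}

lemma subset_belowSet_maxAbove (hcut : ∀ x : α, ∃ m ∈ mxl α, x ≤ m) {S : Set α} :
    S ⊆ belowSet (maxAbove S) := by
  intro s hs
  obtain ⟨m, hm, hsm⟩ := hcut s
  exact ⟨m, ⟨hm, s, hs, hsm⟩, hsm⟩

lemma belowSet_maxAbove_memD (hcut : ∀ x : α, ∃ m ∈ mxl α, x ≤ m) {S : Set α}
    (hS : IsConnSub S) : belowSet (maxAbove S) ∈ DSet α := by
  obtain ⟨s₀, hs₀⟩ := hS.1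
  obtain ⟨m₀, hm₀, hsm₀⟩ := hcut s₀
  have hm₀B : m₀ ∈ maxAbove S := ⟨hm₀, s₀, hs₀, hsm₀⟩
  have hm₀b : m₀ ∈ belowSet (maxAbove S) := ⟨m₀, hm₀B, le_refl m₀⟩
  refine ⟨maxAbove S, fun m hm => hm.1, ⟨m₀, hm₀B⟩, m₀, hm₀b, ?_⟩
  apply Set.Subset.antisymm
  · rintro p ⟨m, hmB, hpm⟩
    obtain ⟨hmmax, s, hs, hsm⟩ := hmB
    have hsb : s ∈ belowSet (maxAbove S) := subset_belowSet_maxAbove hcut hs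
    have hs₀b : s₀ ∈ belowSet (maxAbove S) := subset_belowSet_maxAbove hcut hs₀
    have hmb : m ∈ belowSet (maxAbove S) := ⟨m, ⟨hmmax, s, hs, hsm⟩, le_refl m⟩
    have hpb : p ∈ belowSet (maxAbove S) := ⟨m, ⟨hmmax, s, hs, hsm⟩, hpm⟩
    have h1 : connRel (belowSet (maxAbove S)) m₀ s₀ :=
      Relation.ReflTransGen.single ⟨hm₀b, hs₀b, Or.inr hsm₀⟩
    have h2 : connRel (belowSet (maxAbove S)) s₀ s :=
      connRel_mono (subset_belowSet_maxAbove hcut) (hS.2 s₀ hs₀ s hs)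
    have h3 : connRel (belowSet (maxAbove S)) s m :=
      Relation.ReflTransGen.single ⟨hsb, hmb, Or.inl hsm⟩
    have h4 : connRel (belowSet (maxAbove S)) m p :=
      Relation.ReflTransGen.single ⟨hmb, hpb, Or.inr hpm⟩
    exact ((h1.trans h2).trans h3).trans h4
  · intro p hp
    exact connRel_mem hp hm₀b

end AuxLemmas

theorem stmt11 [PartialOrder α]
    (hcut : ∀ x : α, ∃ m ∈ mxl α, x ≤ m)
    (hD : FPP {C : Set α // C ∈ DSet α})
    (hC : ∀ C ∈ DSet α, FPP C) :
    FPP α := by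
  intro f hf
  -- the induced map on 𝒟(P)
  let g : {C : Set α // C ∈ DSet α} → {C : Set α // C ∈ DSet α} := fun C =>
    ⟨belowSet (maxAbove (f '' C.1)),
      belowSet_maxAbove_memD hcut (isConnSub_image (isConnSub_of_memD C.2) hf)⟩
  have hg : Monotone g := by
    intro C C' hle
    show belowSet (maxAbove (f '' C.1)) ⊆ belowSet (maxAbove (f '' C'.1))
    rintro p ⟨m, ⟨hmmax, s, hs, hsm⟩, hpm⟩
    exact ⟨m, ⟨hmmax, s, Set.image_mono hle hs, hsm⟩, hpm⟩
  obtain ⟨⟨D, hDmem⟩, hfix⟩ := hD g hg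
  have hfix' : belowSet (maxAbove (f '' D)) = D := congrArg Subtype.val hfix
  have hsub : f '' D ⊆ D := by
    rintro _ ⟨d, hd, rfl⟩
    obtain ⟨m, hm, hle⟩ := hcut (f d)
    rw [← hfix']
    exact ⟨m, ⟨hm, f d, ⟨d, hd, rfl⟩, hle⟩, hle⟩
  -- restrict f to D and use the fixed point property of D
  let F : D → D := fun x => ⟨f x.1, hsub ⟨x.1, x.2, rfl⟩⟩
  have hF : Monotone F := fun a b hab => hf hab
  obtain ⟨x, hx⟩ := hC D hDmem F hF
  exact ⟨x.1, congrArg Subtype.val hx⟩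
end

section
/- Let P be the 10-element poset P^{3323} with elements {0,…,10}, covering relations: 0<3, 0<4, 1<3, 1<5, 2<4, 2<5, 3<8, 3<10, 4<6, 4<7, 5<6, 5<7, 6<8, 6<9, 7<9, 7<10. Then P has the fixed point property. -/
/-- The underlying set of the poset `P^{3323}`. -/
def P3323 : Type := Fin 11

instance : DecidableEq P3323 := inferInstanceAs (DecidableEq (Fin 11))
instance : Fintype P3323 := inferInstanceAs (Fintype (Fin 11))

/-- All strict relations of `P^{3323}` (the transitive closure of the covering
relations 0<3, 0<4, 1<3, 1<5, 2<4, 2<5, 3<8, 3<10, 4<6, 4<7, 5<6, 5<7,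
6<8, 6<9, 7<9, 7<10). -/
def strictPairs3323 : List (Fin 11 × Fin 11) :=
  [(0,3),(0,4),(0,6),(0,7),(0,8),(0,9),(0,10),
   (1,3),(1,5),(1,6),(1,7),(1,8),(1,9),(1,10),
   (2,4),(2,5),(2,6),(2,7),(2,8),(2,9),(2,10),
   (3,8),(3,10),
   (4,6),(4,7),(4,8),(4,9),(4,10),
   (5,6),(5,7),(5,8),(5,9),(5,10),
   (6,8),(6,9),
   (7,9),(7,10)]

def le3323 (a b : Fin 11) : Prop := a = b ∨ (a, b) ∈ strictPairs3323

instance (a b : Fin 11) : Decidable (le3323 a b) := by unfold le3323; infer_instance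

lemma le3323_trans : ∀ a b c : Fin 11, le3323 a b → le3323 b c → le3323 a c := by decide

lemma le3323_antisymm : ∀ a b : Fin 11, le3323 a b → le3323 b a → a = b := by decide

instance : PartialOrder P3323 where
  le a b := le3323 a b
  le_refl a := Or.inl rfl
  le_trans a b c := le3323_trans a b c
  le_antisymm a b h h' := le3323_antisymm a b h h'

/-! Auxiliary reflection machinery -/

def leN (a b : Nat) : Bool := (1828942279895502390585130241037963711 >>> (a*11+b)) % 2 == 1

def getv (code i : Nat) : Nat := (code >>> (4*i)) % 16

def downs : Nat → List Nat
  | 1 => [0] | 2 => [0] | 3 => [0,2] | 4 => [0] | 5 => [0,2,4]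
  | 7 => [0,2,3,4,6] | 8 => [0,2,4,5,6] | 10 => [6,9] | _ => []

def ups : Nat → List Nat
  | 2 => [1] | 3 => [1] | 4 => [1,3] | 5 => [1] | 6 => [1,2,3,5]
  | 9 => [1,3,4,5,7,8] | 10 => [7,8] | _ => []

noncomputable def allL (p : Nat → Bool) : List Nat → Bool :=
  List.rec true (fun a _ ih => p a && ih)

lemma allL_eq_true {p : Nat → Bool} : ∀ l : List Nat, allL p l = true ↔ ∀ i ∈ l, p i = true := by
  intro l
  induction l with
  | nil => simp [allL]
  | cons a t ih =>
    show (p a && allL p t) = true ↔ _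
    rw [Bool.and_eq_true, ih]
    simp

noncomputable def compat (k code v : Nat) : Bool :=
  allL (fun i => leN (getv code i) v) (downs k) && allL (fun i => leN v (getv code i)) (ups k)

noncomputable def allV (p : Nat → Bool) : Nat → Bool :=
  Nat.rec true (fun v ih => ih && p v)

lemma allV_succ (p : Nat → Bool) (n : Nat) : allV p (n+1) = (allV p n && p n) := rfl

noncomputable def search : Nat → Nat → Nat → Bool :=
  Nat.rec (fun _ _ => false)
    (fun _ ih k code =>
      allV (fun v => (v == k) || !compat k code v || ih (k+1) (code + (v <<< (4*k)))) 11)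

lemma search_zero (k code : Nat) : search 0 k code = false := rfl

lemma search_succ (n k code : Nat) : search (n+1) k code =
    allV (fun v => (v == k) || !compat k code v || search n (k+1) (code + (v <<< (4*k)))) 11 := rfl

set_option maxRecDepth 100000 in
set_option maxHeartbeats 0 in
theorem searchTrue : search 11 0 0 = true := by decide +kernel

def σf : Fin 11 → Fin 11 := ![2,9,5,7,4,6,1,10,8,0,3]
def τf : Fin 11 → Fin 11 := ![9,6,0,10,4,2,5,3,8,1,7]

lemma sigma_tau : ∀ y : Fin 11, σf (τf y) = y := by decide

lemma leN_iff : ∀ a b : Fin 11, le3323 (σf a) (σf b) ↔ leN a.val b.val = true := by decide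

lemma leN_tau : ∀ x y : Fin 11, le3323 x y → leN (τf x).val (τf y).val = true := by decide

lemma downs_spec : ∀ k : Fin 11, ∀ i ∈ downs k.val, i < k.val ∧ leN i k.val = true := by decide

lemma ups_spec : ∀ k : Fin 11, ∀ i ∈ ups k.val, i < k.val ∧ leN k.val i = true := by decide

lemma allV_lt {p : Nat → Bool} : ∀ n, allV p n = true → ∀ v, v < n → p v = true := by
  intro n
  induction n with
  | zero => intro _ v hv; omega
  | succ n ih =>
    intro h v hv
    rw [allV_succ, Bool.and_eq_true] at h
    rcases Nat.lt_succ_iff_lt_or_eq.mp hv with h' | h'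
    · exact ih h.1 v h'
    · subst h'; exact h.2

lemma getv_lo {i k : Nat} (code v : Nat) (hik : i < k) :
    getv (code + (v <<< (4*k))) i = getv code i := by
  unfold getv
  rw [Nat.shiftLeft_eq, Nat.shiftRight_eq_div_pow, Nat.shiftRight_eq_div_pow]
  have h1 : 2^(4*k) = 2^(4*k - 4*i - 4) * 16 * 2^(4*i) := by
    rw [show 4*k = (4*k-4*i-4) + 4 + 4*i from by omega, pow_add, pow_add]
    norm_num
  rw [h1, ← mul_assoc, Nat.add_mul_div_right _ _ (Nat.pow_pos (by norm_num)),
    ← mul_assoc, Nat.add_mul_mod_self_right]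

lemma getv_hi {code v k : Nat} (hlt : code < 2^(4*k)) (hv : v < 16) :
    getv (code + (v <<< (4*k))) k = v := by
  unfold getv
  rw [Nat.shiftLeft_eq, Nat.shiftRight_eq_div_pow,
    Nat.add_mul_div_right _ _ (Nat.pow_pos (by norm_num)),
    Nat.div_eq_of_lt hlt, Nat.zero_add, Nat.mod_eq_of_lt hv]

lemma code_bound {code v k : Nat} (hlt : code < 2^(4*k)) (hv : v < 16) :
    code + (v <<< (4*k)) < 2^(4*(k+1)) := by
  rw [Nat.shiftLeft_eq]
  have h1 : 2^(4*(k+1)) = 2^(4*k) * 16 := by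
    rw [show 4*(k+1) = 4*k + 4 by omega, pow_add]; norm_num
  have h2 : v * 2^(4*k) ≤ 15 * 2^(4*k) := Nat.mul_le_mul_right _ (by omega)
  omega

lemma main3323 (g : Fin 11 → Fin 11)
    (hg : ∀ a b : Fin 11, leN a.val b.val = true → leN (g a).val (g b).val = true) :
    ∀ n k code (hk : k + n = 11), code < 2^(4*k) →
      (∀ i, (hi : i < k) → getv code i = (g ⟨i, by omega⟩).val) →
      search n k code = true → ∃ x, g x = x := by
  intro n
  induction n with
  | zero =>
    intro k code hk _ _ h
    rw [search_zero] at h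
    exact absurd h (by simp)
  | succ n ih =>
    intro k code hk hlt hcode h
    have hk11 : k < 11 := by omega
    rw [search_succ] at h
    have hp := allV_lt _ h (g ⟨k, hk11⟩).val (g ⟨k, hk11⟩).isLt
    rcases Bool.or_eq_true _ _ ▸ hp with hp' | hps
    · rcases Bool.or_eq_true _ _ ▸ hp' with hp1 | hp2
      · exact ⟨⟨k, hk11⟩, Fin.ext (by simpa using hp1)⟩
      · exfalso
        have hpf : compat k code (g ⟨k, hk11⟩).val = false := by simpa using hp2
        have hcompat : compat k code (g ⟨k, hk11⟩).val = true := by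
          show (allL _ _ && allL _ _) = true
          rw [Bool.and_eq_true]
          constructor
          · rw [allL_eq_true]
            intro i hi
            obtain ⟨hik, hle⟩ := downs_spec ⟨k, hk11⟩ i hi
            rw [hcode i hik]
            exact hg ⟨i, by omega⟩ ⟨k, hk11⟩ hle
          · rw [allL_eq_true]
            intro i hi
            obtain ⟨hik, hle⟩ := ups_spec ⟨k, hk11⟩ i hi
            rw [hcode i hik]
            exact hg ⟨k, hk11⟩ ⟨i, by omega⟩ hle
        rw [hpf] at hcompat
        exact Bool.false_ne_true hcompat
    · refine ih (k+1) _ (by omega) (code_bound hlt (by omega)) ?_ hps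
      intro i hi
      rcases Nat.lt_succ_iff_lt_or_eq.mp hi with h' | h'
      · rw [getv_lo _ _ h', hcode i h']
      · subst h'
        rw [getv_hi hlt (by omega)]

theorem stmt17 : ∀ f : P3323 → P3323, Monotone f → ∃ x, f x = x := by
  intro f hf
  have hg : ∀ a b : Fin 11, leN a.val b.val = true →
      leN ((fun x => τf (f (σf x))) a).val ((fun x => τf (f (σf x))) b).val = true := by
    intro a b hab
    have h1 : le3323 (σf a) (σf b) := (leN_iff a b).mpr hab
    have h2 : le3323 (f (σf a)) (f (σf b)) := hf h1
    exact leN_tau _ _ h2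
  obtain ⟨x, hx⟩ := main3323 (fun x => τf (f (σf x))) hg 11 0 0 rfl (by norm_num)
    (fun i hi => absurd hi (by omega)) searchTrue
  refine ⟨σf x, ?_⟩
  have h := congrArg σf hx
  rw [sigma_tau (f (σf x))] at h
  exact h
end

section
/- Let P be the poset with elements {0,1,2,3,4,5,6,7,8} and covering relations: 0<3, 0<4, 1<3, 1<5, 2<4, 2<5, 3<6, 3<7, 4<6, 4<8, 5<7, 5<8 (three minimal, three middle, three maximal elements forming two stacked 6-crowns). Then every order-preserving map f : P → P without fixed points satisfies f({3,4,5}) = {3,4,5}. -/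
/-- The underlying set of the 9-element poset (two stacked 6-crowns). -/
def P9 : Type := Fin 9

instance : DecidableEq P9 := inferInstanceAs (DecidableEq (Fin 9))
instance : Fintype P9 := inferInstanceAs (Fintype (Fin 9))

/-- All strict relations (the transitive closure of the covering relations
0<3, 0<4, 1<3, 1<5, 2<4, 2<5, 3<6, 3<7, 4<6, 4<8, 5<7, 5<8). -/
def strictPairs9 : List (Fin 9 × Fin 9) :=
  [(0,3),(0,4),(0,6),(0,7),(0,8),
   (1,3),(1,5),(1,6),(1,7),(1,8),
   (2,4),(2,5),(2,6),(2,7),(2,8),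
   (3,6),(3,7),
   (4,6),(4,8),
   (5,7),(5,8)]

def le9 (a b : Fin 9) : Prop := a = b ∨ (a, b) ∈ strictPairs9

instance (a b : Fin 9) : Decidable (le9 a b) := by unfold le9; infer_instance

lemma le9_trans : ∀ a b c : Fin 9, le9 a b → le9 b c → le9 a c := by decide

lemma le9_antisymm : ∀ a b : Fin 9, le9 a b → le9 b a → a = b := by decide

instance : PartialOrder P9 where
  le a b := le9 a b
  le_refl a := Or.inl rfl
  le_trans a b c := le9_trans a b c
  le_antisymm a b h h' := le9_antisymm a b h h'

/-- The element of `P9` corresponding to `n : Fin 9`. -/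
def e (n : Fin 9) : P9 := n

/- ------- auxiliary lemmas ------- -/

lemma min0 : ∀ a : Fin 9, le9 a 0 → a = 0 := by decide
lemma min1 : ∀ a : Fin 9, le9 a 1 → a = 1 := by decide
lemma min2 : ∀ a : Fin 9, le9 a 2 → a = 2 := by decide

lemma up_nonmin : ∀ a b : Fin 9, le9 a b → a ≠ 0 → a ≠ 1 → a ≠ 2 →
    b ≠ 0 ∧ b ≠ 1 ∧ b ≠ 2 := by decide

set_option maxHeartbeats 1000000 in
set_option synthInstance.maxSize 4000 in
set_option synthInstance.maxHeartbeats 1000000 in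
lemma noA3 : ∀ v4 : Fin 9, le9 2 v4 → v4 ≠ 4 → ∀ v5 : Fin 9, le9 2 v5 → v5 ≠ 5 →
    ∀ v6 : Fin 9, le9 2 v6 → le9 v4 v6 → v6 ≠ 6 → ∀ v7 : Fin 9, le9 2 v7 → le9 v5 v7 → v7 ≠ 7 →
    ∀ v8 : Fin 9, le9 v4 v8 → le9 v5 v8 → v8 ≠ 8 →
    ∀ v2 : Fin 9, le9 v2 v4 → le9 v2 v5 → v2 ≠ 2 → False := by decide

set_option maxHeartbeats 1000000 in
set_option synthInstance.maxSize 4000 in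
set_option synthInstance.maxHeartbeats 1000000 in
lemma noA4 : ∀ v3 : Fin 9, le9 1 v3 → v3 ≠ 3 → ∀ v5 : Fin 9, le9 1 v5 → v5 ≠ 5 →
    ∀ v6 : Fin 9, le9 1 v6 → le9 v3 v6 → v6 ≠ 6 → ∀ v7 : Fin 9, le9 v3 v7 → le9 v5 v7 → v7 ≠ 7 →
    ∀ v8 : Fin 9, le9 1 v8 → le9 v5 v8 → v8 ≠ 8 →
    ∀ v1 : Fin 9, le9 v1 v3 → le9 v1 v5 → v1 ≠ 1 → False := by decide

set_option maxHeartbeats 1000000 in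
set_option synthInstance.maxSize 4000 in
set_option synthInstance.maxHeartbeats 1000000 in
lemma noA5 : ∀ v3 : Fin 9, le9 0 v3 → v3 ≠ 3 → ∀ v4 : Fin 9, le9 0 v4 → v4 ≠ 4 →
    ∀ v6 : Fin 9, le9 v3 v6 → le9 v4 v6 → v6 ≠ 6 → ∀ v7 : Fin 9, le9 0 v7 → le9 v3 v7 → v7 ≠ 7 →
    ∀ v8 : Fin 9, le9 0 v8 → le9 v4 v8 → v8 ≠ 8 →
    ∀ v0 : Fin 9, le9 v0 v3 → le9 v0 v4 → v0 ≠ 0 → False := by decide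

set_option maxHeartbeats 1000000 in
set_option synthInstance.maxSize 4000 in
set_option synthInstance.maxHeartbeats 1000000 in
lemma crown6 : ∀ u3 : Fin 9, u3 ≠ 0 → u3 ≠ 1 → u3 ≠ 2 → u3 ≠ 3 →
    ∀ u4 : Fin 9, u4 ≠ 0 → u4 ≠ 1 → u4 ≠ 2 → u4 ≠ 4 →
    ∀ u5 : Fin 9, u5 ≠ 0 → u5 ≠ 1 → u5 ≠ 2 → u5 ≠ 5 →
    ∀ u6 : Fin 9, u6 ≠ 6 → le9 u3 u6 → le9 u4 u6 →
    ∀ u7 : Fin 9, u7 ≠ 7 → le9 u3 u7 → le9 u5 u7 →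
    ∀ u8 : Fin 9, u8 ≠ 8 → le9 u4 u8 → le9 u5 u8 →
    ((u3 = 3 ∨ u3 = 4 ∨ u3 = 5) ∧ (u4 = 3 ∨ u4 = 4 ∨ u4 = 5) ∧ (u5 = 3 ∨ u5 = 4 ∨ u5 = 5) ∧
     (u3 = 3 ∨ u4 = 3 ∨ u5 = 3) ∧ (u3 = 4 ∨ u4 = 4 ∨ u5 = 4) ∧
     (u3 = 5 ∨ u4 = 5 ∨ u5 = 5)) := by decide

theorem stmt18 (f : P9 → P9) (hf : Monotone f) (hnofix : ∀ x, f x ≠ x) :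
    f '' {e 3, e 4, e 5} = {e 3, e 4, e 5} := by
  have hle : ∀ a b : Fin 9, le9 a b → le9 (f (e a)) (f (e b)) := fun a b h => hf h
  have hn : ∀ x : Fin 9, f (e x) ≠ e x := hnofix
  have hl : ∀ {a b : Fin 9}, f (e a) = e b → ∀ c : Fin 9, le9 a c → le9 (e b) (f (e c)) :=
    fun h c hac => h ▸ hle _ c hac
  -- f (e 3) is not minimal
  have h3 : f (e 3) ≠ e 0 ∧ f (e 3) ≠ e 1 ∧ f (e 3) ≠ e 2 := by
    refine ⟨?_, ?_, ?_⟩ <;> intro h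
    · have h0 := hle 0 3 (by decide); rw [h] at h0
      exact hn 0 (min0 _ h0)
    · have h1 := hle 1 3 (by decide); rw [h] at h1
      exact hn 1 (min1 _ h1)
    · have h0 := hle 0 3 (by decide); rw [h] at h0
      have h0 : f (e 0) = e 2 := min2 _ h0
      have h1 := hle 1 3 (by decide); rw [h] at h1
      have h1 : f (e 1) = e 2 := min2 _ h1
      exact noA3 (f (e 4)) (hl h0 4 (by decide)) (hn 4)
        (f (e 5)) (hl h1 5 (by decide)) (hn 5)
        (f (e 6)) (hl h 6 (by decide)) (hle 4 6 (by decide)) (hn 6)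
        (f (e 7)) (hl h 7 (by decide)) (hle 5 7 (by decide)) (hn 7)
        (f (e 8)) (hle 4 8 (by decide)) (hle 5 8 (by decide)) (hn 8)
        (f (e 2)) (hle 2 4 (by decide)) (hle 2 5 (by decide)) (hn 2)
  -- f (e 4) is not minimal
  have h4 : f (e 4) ≠ e 0 ∧ f (e 4) ≠ e 1 ∧ f (e 4) ≠ e 2 := by
    refine ⟨?_, ?_, ?_⟩ <;> intro h
    · have h0 := hle 0 4 (by decide); rw [h] at h0
      exact hn 0 (min0 _ h0)
    · have h0 := hle 0 4 (by decide); rw [h] at h0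
      have h0 : f (e 0) = e 1 := min1 _ h0
      have h2 := hle 2 4 (by decide); rw [h] at h2
      have h2 : f (e 2) = e 1 := min1 _ h2
      exact noA4 (f (e 3)) (hl h0 3 (by decide)) (hn 3)
        (f (e 5)) (hl h2 5 (by decide)) (hn 5)
        (f (e 6)) (hl h 6 (by decide)) (hle 3 6 (by decide)) (hn 6)
        (f (e 7)) (hle 3 7 (by decide)) (hle 5 7 (by decide)) (hn 7)
        (f (e 8)) (hl h 8 (by decide)) (hle 5 8 (by decide)) (hn 8)
        (f (e 1)) (hle 1 3 (by decide)) (hle 1 5 (by decide)) (hn 1)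
    · have h2 := hle 2 4 (by decide); rw [h] at h2
      exact hn 2 (min2 _ h2)
  -- f (e 5) is not minimal
  have h5 : f (e 5) ≠ e 0 ∧ f (e 5) ≠ e 1 ∧ f (e 5) ≠ e 2 := by
    refine ⟨?_, ?_, ?_⟩ <;> intro h
    · have h1 := hle 1 5 (by decide); rw [h] at h1
      have h1 : f (e 1) = e 0 := min0 _ h1
      have h2 := hle 2 5 (by decide); rw [h] at h2
      have h2 : f (e 2) = e 0 := min0 _ h2
      exact noA5 (f (e 3)) (hl h1 3 (by decide)) (hn 3)
        (f (e 4)) (hl h2 4 (by decide)) (hn 4)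
        (f (e 6)) (hle 3 6 (by decide)) (hle 4 6 (by decide)) (hn 6)
        (f (e 7)) (hl h 7 (by decide)) (hle 3 7 (by decide)) (hn 7)
        (f (e 8)) (hl h 8 (by decide)) (hle 4 8 (by decide)) (hn 8)
        (f (e 0)) (hle 0 3 (by decide)) (hle 0 4 (by decide)) (hn 0)
    · have h1 := hle 1 5 (by decide); rw [h] at h1
      exact hn 1 (min1 _ h1)
    · have h2 := hle 2 5 (by decide); rw [h] at h2
      exact hn 2 (min2 _ h2)
  have h6 := up_nonmin (f (e 3)) (f (e 6)) (hle 3 6 (by decide)) h3.1 h3.2.1 h3.2.2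
  have h7 := up_nonmin (f (e 3)) (f (e 7)) (hle 3 7 (by decide)) h3.1 h3.2.1 h3.2.2
  have h8 := up_nonmin (f (e 4)) (f (e 8)) (hle 4 8 (by decide)) h4.1 h4.2.1 h4.2.2
  obtain ⟨c3, c4, c5, s3, s4, s5⟩ :=
    crown6 (f (e 3)) h3.1 h3.2.1 h3.2.2 (hn 3)
      (f (e 4)) h4.1 h4.2.1 h4.2.2 (hn 4)
      (f (e 5)) h5.1 h5.2.1 h5.2.2 (hn 5)
      (f (e 6)) (hn 6) (hle 3 6 (by decide)) (hle 4 6 (by decide))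
      (f (e 7)) (hn 7) (hle 3 7 (by decide)) (hle 5 7 (by decide))
      (f (e 8)) (hn 8) (hle 4 8 (by decide)) (hle 5 8 (by decide))
  ext x
  simp only [Set.mem_image, Set.mem_insert_iff, Set.mem_singleton_iff]
  constructor
  · rintro ⟨a, (rfl | rfl | rfl), rfl⟩
    · exact c3
    · exact c4
    · exact c5
  · rintro (rfl | rfl | rfl)
    · rcases s3 with h | h | h
      · exact ⟨e 3, Or.inl rfl, h⟩
      · exact ⟨e 4, Or.inr (Or.inl rfl), h⟩
      · exact ⟨e 5, Or.inr (Or.inr rfl), h⟩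
    · rcases s4 with h | h | h
      · exact ⟨e 3, Or.inl rfl, h⟩
      · exact ⟨e 4, Or.inr (Or.inl rfl), h⟩
      · exact ⟨e 5, Or.inr (Or.inr rfl), h⟩
    · rcases s5 with h | h | h
      · exact ⟨e 3, Or.inl rfl, h⟩
      · exact ⟨e 4, Or.inr (Or.inl rfl), h⟩
      · exact ⟨e 5, Or.inr (Or.inr rfl), h⟩
end
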